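/- arXiv:2106.14872 — 6 statements merged into one kernel-verified Lean document; each statement's English description precedes it below -/
import Mathlib

section
/- Sufficient Condition for Linear Chaos: Let X be a (real or complex) infinite-dimensional separable Banach space and let A be a densely defined linear operator in X such that every power A^n (n ∈ ℕ) is a closed operator. Suppose there exist a set Y ⊆ C^∞(A) dense in X and a mapping B : Y → Y such that (1) ABf = f for every f ∈ Y, and (2) for every f ∈ Y there exist α = α(f) ∈ (0,1) and c = c(f,α) > 0 with max(‖A^n f‖, ‖B^n f‖) ≤ c·α^n for all n ∈ ℕ. Then A is chaotic. -/
open Filter Topology TopologicalSpace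

/-- The domain of the `n`-th power of the operator `A` with domain `D`:
`x ∈ D(Aⁿ)` iff `Aᵏx ∈ D(A)` for all `k < n`. -/
def opDom {X : Type*} (A : X → X) (D : Set X) (n : ℕ) : Set X :=
  {x | ∀ k < n, A^[k] x ∈ D}

/-- `C^∞(A) = ⋂ₙ D(Aⁿ)`. -/
def opCinf {X : Type*} (A : X → X) (D : Set X) : Set X :=
  {x | ∀ k : ℕ, A^[k] x ∈ D}

/-- `A` is linear on the subspace `D`. -/
def IsLinearOn (𝕜 : Type*) {X : Type*} [RCLike 𝕜] [NormedAddCommGroup X]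
    [NormedSpace 𝕜 X] (A : X → X) (D : Set X) : Prop :=
  (∀ x ∈ D, ∀ y ∈ D, A (x + y) = A x + A y) ∧
  (∀ (c : 𝕜), ∀ x ∈ D, A (c • x) = c • A x)

/-- The `n`-th power of `A` (with domain `D`) is a closed operator:
its graph is closed in `X × X`. -/
def ClosedPower {X : Type*} [NormedAddCommGroup X] (A : X → X) (D : Set X)
    (n : ℕ) : Prop :=
  IsClosed {p : X × X | p.1 ∈ opDom A D n ∧ p.2 = A^[n] p.1}

/-- A hypercyclic vector for `A`: a nonzero `f ∈ C^∞(A)` with dense orbit. -/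
def HypercyclicVec {X : Type*} [NormedAddCommGroup X] (A : X → X) (D : Set X)
    (f : X) : Prop :=
  f ∈ opCinf A D ∧ f ≠ 0 ∧ Dense (Set.range fun n : ℕ => A^[n] f)

/-- `A` (with domain `D`) is hypercyclic. -/
def HypercyclicOp {X : Type*} [NormedAddCommGroup X] (A : X → X) (D : Set X) :
    Prop :=
  ∃ f, HypercyclicVec A D f

/-- `f` is a periodic point of `A`: `f ∈ D(A^N)` and `A^N f = f` for some `N ≥ 1`. -/
def PeriodicPt {X : Type*} (A : X → X) (D : Set X) (f : X) : Prop :=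
  ∃ N : ℕ, 0 < N ∧ f ∈ opDom A D N ∧ A^[N] f = f

/-- `A` (with domain `D`) is chaotic: hypercyclic with a dense set of periodic
points. -/
def ChaoticOp {X : Type*} [NormedAddCommGroup X] (A : X → X) (D : Set X) : Prop :=
  HypercyclicOp A D ∧ Dense {f | PeriodicPt A D f}


set_option linter.unusedSectionVars false

section lcAux

variable {𝕜 X : Type*} [RCLike 𝕜] [NormedAddCommGroup X] [NormedSpace 𝕜 X]
variable {D : Submodule 𝕜 X} {A B : X → X} {Y : Set X}


variable {𝕜 X : Type*} [RCLike 𝕜] [NormedAddCommGroup X] [NormedSpace 𝕜 X]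
variable {D : Submodule 𝕜 X} {A B : X → X} {Y : Set X}

lemma lc_opDom_anti {m n : ℕ} (h : m ≤ n) :
    opDom A (D : Set X) n ⊆ opDom A (D : Set X) m :=
  fun _ hx k hk => hx k (lt_of_lt_of_le hk h)

lemma lc_cinf_mem {x : X} (hx : x ∈ opCinf A (D : Set X)) (n : ℕ) :
    x ∈ opDom A (D : Set X) n := fun k _ => hx k

lemma lc_cinf_iter {x : X} (hx : x ∈ opCinf A (D : Set X)) (m : ℕ) :
    A^[m] x ∈ opCinf A (D : Set X) := fun k => by
  rw [← Function.iterate_add_apply]; exact hx (k + m)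

lemma lc_map_zero (hlin : IsLinearOn 𝕜 A (D : Set X)) : A 0 = 0 := by
  have h := hlin.1 0 D.zero_mem 0 D.zero_mem
  rw [add_zero] at h
  exact (left_eq_add.mp h)

lemma lc_iter_zero (hlin : IsLinearOn 𝕜 A (D : Set X)) : ∀ k, A^[k] (0 : X) = 0
  | 0 => rfl
  | (k + 1) => by
      rw [Function.iterate_succ_apply', lc_iter_zero hlin k, lc_map_zero hlin]

lemma lc_zero_mem (hlin : IsLinearOn 𝕜 A (D : Set X)) (n : ℕ) :
    (0 : X) ∈ opDom A (D : Set X) n := fun k _ => by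
  rw [lc_iter_zero hlin k]; exact D.zero_mem

lemma lc_add (hlin : IsLinearOn 𝕜 A (D : Set X)) :
    ∀ n : ℕ, ∀ x y : X, x ∈ opDom A (D : Set X) n → y ∈ opDom A (D : Set X) n →
      (x + y ∈ opDom A (D : Set X) n ∧ A^[n] (x + y) = A^[n] x + A^[n] y) := by
  intro n
  induction n with
  | zero => exact fun x y _ _ => ⟨fun k hk => absurd hk (Nat.not_lt_zero k), rfl⟩
  | succ n ih =>
    intro x y hx hy
    obtain ⟨hm, he⟩ := ih x y (lc_opDom_anti (Nat.le_succ n) hx)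
      (lc_opDom_anti (Nat.le_succ n) hy)
    have hxD : A^[n] x ∈ D := hx n (Nat.lt_succ_self n)
    have hyD : A^[n] y ∈ D := hy n (Nat.lt_succ_self n)
    have hsum : A^[n] (x + y) ∈ D := by rw [he]; exact D.add_mem hxD hyD
    refine ⟨?_, ?_⟩
    · intro k hk
      rcases Nat.lt_succ_iff_lt_or_eq.mp hk with h | h
      · exact hm k h
      · rw [h]; exact hsum
    · rw [Function.iterate_succ_apply', Function.iterate_succ_apply',
        Function.iterate_succ_apply', he, hlin.1 _ hxD _ hyD]

lemma lc_sum (hlin : IsLinearOn 𝕜 A (D : Set X)) (n : ℕ) (F : ℕ → X)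
    (hF : ∀ i, F i ∈ opDom A (D : Set X) n) :
    ∀ m : ℕ, ((∑ i ∈ Finset.range m, F i) ∈ opDom A (D : Set X) n ∧
      A^[n] (∑ i ∈ Finset.range m, F i) = ∑ i ∈ Finset.range m, A^[n] (F i)) := by
  intro m
  induction m with
  | zero => simpa using ⟨lc_zero_mem hlin n, lc_iter_zero hlin n⟩
  | succ m ih =>
    rw [Finset.sum_range_succ, Finset.sum_range_succ]
    obtain ⟨hm, he⟩ := lc_add hlin n _ _ ih.1 (hF m)
    exact ⟨hm, by rw [he, ih.2]⟩

lemma lc_closed_lim (hcl : ∀ n : ℕ, 0 < n → ClosedPower A (D : Set X) n) (n : ℕ)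
    {x yy : X} {S T : ℕ → X} (hS : ∀ m, S m ∈ opDom A (D : Set X) n)
    (hT : ∀ m, A^[n] (S m) = T m)
    (hx : Tendsto S atTop (𝓝 x)) (hy : Tendsto T atTop (𝓝 yy)) :
    x ∈ opDom A (D : Set X) n ∧ A^[n] x = yy := by
  rcases Nat.eq_zero_or_pos n with h | h
  · subst h
    refine ⟨fun k hk => absurd hk (Nat.not_lt_zero k), ?_⟩
    have hST : S = T := funext fun m => hT m
    rw [hST] at hx
    simpa using tendsto_nhds_unique hx hy
  · have hC := hcl n h
    have hmem : ∀ m, (S m, T m) ∈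
        {p : X × X | p.1 ∈ opDom A (D : Set X) n ∧ p.2 = A^[n] p.1} :=
      fun m => ⟨hS m, (hT m).symm⟩
    have := hC.mem_of_tendsto (hx.prodMk_nhds hy) (Filter.Eventually.of_forall hmem)
    exact ⟨this.1, this.2.symm⟩

lemma lc_Bmem (hBmaps : Set.MapsTo B Y Y) {f : X} (hf : f ∈ Y) :
    ∀ m, B^[m] f ∈ Y
  | 0 => hf
  | (m + 1) => by
      rw [Function.iterate_succ_apply']
      exact hBmaps (lc_Bmem hBmaps hf m)

lemma lc_AB_le (hBmaps : Set.MapsTo B Y Y) (h1 : ∀ f ∈ Y, A (B f) = f)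
    {f : X} (hf : f ∈ Y) :
    ∀ k m, k ≤ m → A^[k] (B^[m] f) = B^[m - k] f := by
  intro k
  induction k with
  | zero => intro m _; simp
  | succ k ih =>
    intro m hm
    obtain ⟨m', rfl⟩ : ∃ m', m = m' + 1 := ⟨m - 1, by omega⟩
    have h1' : A (B^[m' + 1] f) = B^[m'] f := by
      rw [Function.iterate_succ_apply']
      exact h1 _ (lc_Bmem hBmaps hf m')
    rw [Function.iterate_succ_apply, h1', ih m' (by omega)]
    simp [Nat.succ_sub_succ]

lemma lc_AB_ge (hBmaps : Set.MapsTo B Y Y) (h1 : ∀ f ∈ Y, A (B f) = f)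
    {f : X} (hf : f ∈ Y) :
    ∀ k m, m ≤ k → A^[k] (B^[m] f) = A^[k - m] f := by
  intro k m h
  have h2 : A^[m] (B^[m] f) = f := by
    simpa using lc_AB_le hBmaps h1 hf m m le_rfl
  calc A^[k] (B^[m] f) = A^[(k - m) + m] (B^[m] f) := by rw [Nat.sub_add_cancel h]
  _ = A^[k - m] (A^[m] (B^[m] f)) := Function.iterate_add_apply A (k - m) m _
  _ = A^[k - m] f := by rw [h2]


lemma lc_dense_periodic [CompleteSpace X]
    (hlin : IsLinearOn 𝕜 A (D : Set X))
    (hcl : ∀ n : ℕ, 0 < n → ClosedPower A (D : Set X) n)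
    (hYsub : Y ⊆ opCinf A (D : Set X)) (hYdense : Dense Y)
    (hBmaps : Set.MapsTo B Y Y)
    (h1 : ∀ f ∈ Y, A (B f) = f)
    (h2 : ∀ f ∈ Y, ∃ α ∈ Set.Ioo (0 : ℝ) 1, ∃ c > 0,
      ∀ n : ℕ, 0 < n → max ‖A^[n] f‖ ‖B^[n] f‖ ≤ c * α ^ n) :
    Dense {f : X | PeriodicPt A (D : Set X) f} := by
  rw [Metric.dense_iff]
  intro x r hr
  obtain ⟨f, hfball, hfY⟩ := Metric.dense_iff.mp hYdense x (r / 2) (by positivity)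
  obtain ⟨α, hα, c, hc, hb⟩ := h2 f hfY
  have hα0 : (0 : ℝ) < α := hα.1
  have hα1 : α < 1 := hα.2
  -- choose N
  have hε' : (0 : ℝ) < r / 2 * (1 - α) / (4 * c) := by
    have : (0:ℝ) < 1 - α := by linarith
    positivity
  obtain ⟨N0, hN0⟩ := exists_pow_lt_of_lt_one hε' hα1
  set N := N0 + 1 with hNdef
  have hN1 : 1 ≤ N := Nat.le_add_left 1 N0
  set β := α ^ N with hβdef
  have hβ0 : (0 : ℝ) < β := pow_pos hα0 N
  have hβ1 : β < 1 := pow_lt_one₀ hα0.le hα1 (by omega)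
  have hβlt : β < r / 2 * (1 - α) / (4 * c) :=
    lt_of_le_of_lt (pow_le_pow_of_le_one hα0.le hα1.le (by omega)) hN0
  have hβα : β ≤ α := by
    simpa using pow_le_pow_of_le_one hα0.le hα1.le hN1
  -- the two series
  set u : ℕ → X := fun m => B^[m * N] f with hu
  set v : ℕ → X := fun m => A^[m * N] f with hv
  have hu0 : u 0 = f := by simp [hu]
  have hv0 : v 0 = f := by simp [hv]
  have hfC : f ∈ opCinf A (D : Set X) := hYsub hfY
  have huY : ∀ m, u m ∈ Y := fun m => lc_Bmem hBmaps hfY (m * N)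
  have huC : ∀ m, u m ∈ opCinf A (D : Set X) := fun m => hYsub (huY m)
  have hvC : ∀ m, v m ∈ opCinf A (D : Set X) := fun m => lc_cinf_iter hfC (m * N)
  have hpow : ∀ m : ℕ, α ^ (m * N) = β ^ m := fun m => by
    rw [hβdef, ← pow_mul, mul_comm N m]
  have hAn : ∀ m : ℕ, 1 ≤ m → ‖v m‖ ≤ c * β ^ m := by
    intro m hm
    have := hb (m * N) (by positivity)
    rw [hpow m] at this
    exact le_trans (le_max_left _ _) this
  have hBn : ∀ m : ℕ, 1 ≤ m → ‖u m‖ ≤ c * β ^ m := by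
    intro m hm
    have := hb (m * N) (by positivity)
    rw [hpow m] at this
    exact le_trans (le_max_right _ _) this
  have hgeo : Summable (fun m : ℕ => (c + ‖f‖) * β ^ m) :=
    (summable_geometric_of_lt_one hβ0.le hβ1).mul_left _
  have hub : ∀ m, ‖u m‖ ≤ (c + ‖f‖) * β ^ m := by
    intro m
    rcases Nat.eq_zero_or_pos m with h | h
    · subst h; simp [hu]
      nlinarith [norm_nonneg f, hc]
    · refine le_trans (hBn m h) ?_
      have : (0:ℝ) ≤ β ^ m := by positivity
      nlinarith [norm_nonneg f]
  have hvb : ∀ m, ‖v m‖ ≤ (c + ‖f‖) * β ^ m := by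
    intro m
    rcases Nat.eq_zero_or_pos m with h | h
    · subst h; simp [hv]
      nlinarith [norm_nonneg f, hc]
    · refine le_trans (hAn m h) ?_
      have : (0:ℝ) ≤ β ^ m := by positivity
      nlinarith [norm_nonneg f]
  have hus : Summable u := Summable.of_norm_bounded hgeo hub
  have hvs : Summable v := Summable.of_norm_bounded hgeo hvb
  set P : X := ∑' m, u m with hP
  set V : X := ∑' m, v m with hV
  set g : X := P + (V - v 0) with hg
  -- partial sums
  set S : ℕ → X := fun m => (∑ i ∈ Finset.range m, u i) + (∑ i ∈ Finset.range m, v (i + 1))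
    with hS
  have hudom : ∀ i, u i ∈ opDom A (D : Set X) N := fun i => lc_cinf_mem (huC i) N
  have hvdom : ∀ i, v (i + 1) ∈ opDom A (D : Set X) N := fun i => lc_cinf_mem (hvC (i + 1)) N
  have hSdom : ∀ m, S m ∈ opDom A (D : Set X) N := by
    intro m
    exact (lc_add hlin N _ _ (lc_sum hlin N u hudom m).1
      (lc_sum hlin N (fun i => v (i + 1)) hvdom m).1).1
  -- images of the terms
  have hAu : ∀ i, A^[N] (u i) = if i = 0 then v 1 else u (i - 1) := by
    intro i
    rcases Nat.eq_zero_or_pos i with h | h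
    · subst h
      simp [hu, hv, hv0]
    · rw [if_neg (by omega)]
      have := lc_AB_le hBmaps h1 hfY N (i * N) (Nat.le_mul_of_pos_left N h)
      rw [hu]
      simp only []
      rw [this]
      congr 1
      have : i * N - N = (i - 1) * N := by
        cases i with
        | zero => omega
        | succ i' => simp [Nat.succ_mul]
      rw [this]
  have hAv : ∀ i, A^[N] (v (i + 1)) = v (i + 2) := by
    intro i
    rw [hv]
    simp only []
    rw [← Function.iterate_add_apply]
    congr 1
    ring
  have hAS : ∀ m, A^[N] (S m) =
      (∑ i ∈ Finset.range m, A^[N] (u i)) + (∑ i ∈ Finset.range m, A^[N] (v (i + 1))) := by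
    intro m
    rw [hS]
    simp only []
    rw [(lc_add hlin N _ _ (lc_sum hlin N u hudom m).1
      (lc_sum hlin N (fun i => v (i + 1)) hvdom m).1).2,
      (lc_sum hlin N u hudom m).2, (lc_sum hlin N (fun i => v (i + 1)) hvdom m).2]
  -- limits
  have hS_tendsto : Tendsto S atTop (𝓝 (P + (V - v 0))) := by
    apply Tendsto.add hus.hasSum.tendsto_sum_nat
    have h1' : Summable (fun i => v (i + 1)) := (summable_nat_add_iff 1).mpr hvs
    have : ∑' i, v (i + 1) = V - v 0 := by
      have := Summable.sum_add_tsum_nat_add (f := v) 1 hvs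
      simp only [Finset.sum_range_one] at this
      rw [← hV] at this
      exact eq_sub_of_add_eq' this
    rw [← this]
    exact h1'.hasSum.tendsto_sum_nat
  have hshift1 : ∑' i, u (i + 1) = P - u 0 := by
    have := Summable.sum_add_tsum_nat_add (f := u) 1 hus
    simp only [Finset.sum_range_one] at this
    rw [← hP] at this
    exact eq_sub_of_add_eq' this
  have hshiftv1 : ∑' i, v (i + 1) = V - v 0 := by
    have := Summable.sum_add_tsum_nat_add (f := v) 1 hvs
    simp only [Finset.sum_range_one] at this
    rw [← hV] at this
    exact eq_sub_of_add_eq' this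
  have hshiftv2 : ∑' i, v (i + 2) = V - v 0 - v 1 := by
    have := Summable.sum_add_tsum_nat_add (f := v) 2 hvs
    rw [Finset.sum_range_succ, Finset.sum_range_one, ← hV] at this
    have h' : ∑' i, v (i + 2) = V - (v 0 + v 1) := eq_sub_of_add_eq' this
    rw [h']; abel
  have hAS_tendsto : Tendsto (fun m => A^[N] (S m)) atTop (𝓝 g) := by
    have hsum : Summable (fun i => A^[N] (u i)) := by
      apply (summable_nat_add_iff 1).mp
      have : (fun i => A^[N] (u (i + 1))) = fun i => u i := by
        funext i; rw [hAu (i + 1)]; simp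
      rw [this]
      exact hus
    have hFU : Tendsto (fun m => ∑ i ∈ Finset.range m, A^[N] (u i)) atTop
        (𝓝 (v 1 + P)) := by
      have : ∑' i, A^[N] (u i) = v 1 + P := by
        have h0 := Summable.sum_add_tsum_nat_add (f := fun i => A^[N] (u i)) 1 hsum
        simp only [Finset.sum_range_one] at h0
        have he1 : (fun i => A^[N] (u (i + 1))) = fun i => u i := by
          funext i; rw [hAu (i + 1)]; simp
        rw [he1] at h0
        have he0 : A^[N] (u 0) = v 1 := by rw [hAu 0]; simp
        rw [he0, ← hP] at h0
        exact h0.symm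
      rw [← this]
      exact hsum.hasSum.tendsto_sum_nat
    have hFV : Tendsto (fun m => ∑ i ∈ Finset.range m, A^[N] (v (i + 1))) atTop
        (𝓝 (V - v 0 - v 1)) := by
      have he : (fun i => A^[N] (v (i + 1))) = fun i => v (i + 2) := by
        funext i; exact hAv i
      rw [he, ← hshiftv2]
      have hsum2 : Summable (fun i => v (i + 2)) := (summable_nat_add_iff 2).mpr hvs
      exact hsum2.hasSum.tendsto_sum_nat
    have : Tendsto (fun m => A^[N] (S m)) atTop (𝓝 ((v 1 + P) + (V - v 0 - v 1))) := by
      simp only [hAS]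
      exact hFU.add hFV
    have hgeq : (v 1 + P) + (V - v 0 - v 1) = g := by rw [hg]; abel
    rwa [hgeq] at this
  obtain ⟨hgdom, hgfix⟩ := lc_closed_lim hcl N hSdom (fun m => rfl) hS_tendsto
    (by simpa using hAS_tendsto)
  -- g is periodic
  have hper : PeriodicPt A (D : Set X) g := ⟨N, by omega, hgdom, hgfix⟩
  -- distance estimate
  have hgeo2 : HasSum (fun m : ℕ => c * β ^ (m + 1)) (c * β * (1 - β)⁻¹) := by
    have h := (hasSum_geometric_of_lt_one hβ0.le hβ1).mul_left (c * β)
    have he : (fun m : ℕ => c * β * β ^ m) = fun m : ℕ => c * β ^ (m + 1) := by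
      funext m; ring
    rwa [he] at h
  have hPf : ‖P - u 0‖ ≤ c * β * (1 - β)⁻¹ := by
    rw [← hshift1]
    exact tsum_of_norm_bounded hgeo2 (fun i => hBn (i + 1) (by omega))
  have hVf : ‖V - v 0‖ ≤ c * β * (1 - β)⁻¹ := by
    rw [← hshiftv1]
    exact tsum_of_norm_bounded hgeo2 (fun i => hAn (i + 1) (by omega))
  have hginv : (1 - β)⁻¹ ≤ (1 - α)⁻¹ := by
    apply inv_anti₀ (by linarith) (by linarith)
  have hgf : ‖g - f‖ < r / 2 := by
    have h0 : g - f = (P - u 0) + (V - v 0) := by rw [hg, hu0]; abel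
    have h1' : ‖g - f‖ ≤ c * β * (1 - β)⁻¹ + c * β * (1 - β)⁻¹ := by
      rw [h0]; exact le_trans (norm_add_le _ _) (add_le_add hPf hVf)
    have h2' : c * β * (1 - β)⁻¹ ≤ c * β * (1 - α)⁻¹ :=
      mul_le_mul_of_nonneg_left hginv (by positivity)
    have h3' : c * β * (1 - α)⁻¹ < r / 8 := by
      have hβlt' : c * β < c * (r / 2 * (1 - α) / (4 * c)) :=
        mul_lt_mul_of_pos_left hβlt hc
      have hcc : c * (r / 2 * (1 - α) / (4 * c)) = r / 8 * (1 - α) := by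
        field_simp; ring
      rw [hcc] at hβlt'
      have h1α : (0:ℝ) < 1 - α := by linarith
      calc c * β * (1 - α)⁻¹ < r / 8 * (1 - α) * (1 - α)⁻¹ :=
            mul_lt_mul_of_pos_right hβlt' (by positivity)
        _ = r / 8 := by field_simp
    linarith
  refine ⟨g, ?_, hper⟩
  rw [Metric.mem_ball]
  have hfx : dist f x < r / 2 := Metric.mem_ball.mp hfball
  calc dist g x ≤ dist g f + dist f x := dist_triangle g f x
    _ < r / 2 + r / 2 := by
        apply add_lt_add_of_lt_of_lt _ hfx
        rw [dist_eq_norm]; exact hgf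
    _ = r := by ring

set_option maxHeartbeats 2000000 in

lemma lc_hypercyclic [CompleteSpace X] [SeparableSpace X]
    (hinfdim : ¬ FiniteDimensional 𝕜 X)
    (hlin : IsLinearOn 𝕜 A (D : Set X))
    (hcl : ∀ n : ℕ, 0 < n → ClosedPower A (D : Set X) n)
    (hYsub : Y ⊆ opCinf A (D : Set X)) (hYdense : Dense Y)
    (hBmaps : Set.MapsTo B Y Y)
    (h1 : ∀ f ∈ Y, A (B f) = f)
    (h2 : ∀ f ∈ Y, ∃ α ∈ Set.Ioo (0 : ℝ) 1, ∃ c > 0,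
      ∀ n : ℕ, 0 < n → max ‖A^[n] f‖ ‖B^[n] f‖ ≤ c * α ^ n) :
    ∃ f : X, f ∈ opCinf A (D : Set X) ∧ f ≠ 0 ∧
      Dense (Set.range fun n : ℕ => A^[n] f) := by
  classical
  haveI := UniformSpace.secondCountable_of_separable X
  obtain ⟨t, htY, htc, htd⟩ := hYdense.exists_countable_dense_subset
  have htne : t.Nonempty := htd.nonempty
  obtain ⟨e, het⟩ := htc.exists_eq_range htne
  have heY : ∀ k, e k ∈ Y := fun k => htY (het ▸ Set.mem_range_self k)
  have hed : Dense (Set.range e) := het ▸ htd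
  obtain ⟨x0, hx0⟩ : ∃ x : X, x ≠ 0 := by
    by_contra h
    push_neg at h
    have : Subsingleton X := ⟨fun a b => by rw [h a, h b]⟩
    exact hinfdim inferInstance
  set z : X := ((3 / ‖x0‖ : ℝ) : 𝕜) • x0 with hz
  clear_value z
  have hznorm : ‖z‖ = 3 := by
    rw [hz, norm_smul, RCLike.norm_ofReal,
      abs_of_pos (by have := norm_pos_iff.mpr hx0; positivity)]
    have hne : ‖x0‖ ≠ 0 := norm_ne_zero_iff.mpr hx0
    field_simp
  obtain ⟨ys, hysball, hysY⟩ := Metric.dense_iff.mp hYdense z 1 one_pos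
  have hys2 : 2 ≤ ‖ys‖ := by
    have hd : dist ys z < 1 := Metric.mem_ball.mp hysball
    rw [dist_eq_norm] at hd
    have h2' : ‖z‖ - ‖ys‖ ≤ ‖z - ys‖ := norm_sub_norm_le z ys
    have h3' : ‖z - ys‖ = ‖ys - z‖ := norm_sub_rev z ys
    linarith
  set y : ℕ → X := fun j => match j with
    | 0 => ys
    | (j' + 1) => e (Nat.unpair j').1
    with hy
  clear_value y
  have hy0 : y 0 = ys := by rw [hy]
  have hys' : ∀ j', y (j' + 1) = e (Nat.unpair j').1 := fun j' => by rw [hy]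
  have hyY : ∀ j, y j ∈ Y := fun j => by
    cases j with
    | zero => rw [hy0]; exact hysY
    | succ j' => rw [hys']; exact heY _
  have h2' := fun j => h2 (y j) (hyY j)
  choose α hαm c hc hbound using h2'
  have hA : ∀ j m, 1 ≤ m → ‖A^[m] (y j)‖ ≤ c j * α j ^ m :=
    fun j m hm => le_trans (le_max_left _ _) (hbound j m hm)
  have hB : ∀ j m, 1 ≤ m → ‖B^[m] (y j)‖ ≤ c j * α j ^ m :=
    fun j m hm => le_trans (le_max_right _ _) (hbound j m hm)
  have hdecay : ∀ i, Tendsto (fun m : ℕ => c i * α i ^ m) atTop (𝓝 0) := by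
    intro i
    have := (tendsto_pow_atTop_nhds_zero_of_lt_one (hαm i).1.le (hαm i).2).const_mul (c i)
    simpa using this
  have hstep : ∀ j s : ℕ, ∃ N, s < N ∧ ∀ i ≤ j + 1,
      c i * α i ^ (N - s) ≤ (1/4 : ℝ) ^ (j + 1) := by
    intro j s
    have hev : ∀ᶠ m in atTop, ∀ i ∈ Finset.range (j + 2),
        c i * α i ^ m ≤ (1/4 : ℝ) ^ (j + 1) := by
      rw [Filter.eventually_all_finset]
      exact fun i _ => (hdecay i).eventually_le_const (by positivity)
    obtain ⟨M, hM⟩ := Filter.eventually_atTop.mp hev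
    refine ⟨s + M + 1, by omega, fun i hi => ?_⟩
    exact hM (s + M + 1 - s) (by omega) i (Finset.mem_range.mpr (by omega))
  obtain ⟨n, hn0, hnspec⟩ : ∃ n : ℕ → ℕ, n 0 = 0 ∧ ∀ j, n j < n (j + 1) ∧
      ∀ i ≤ j + 1, c i * α i ^ (n (j + 1) - n j) ≤ (1/4 : ℝ) ^ (j + 1) := by
    refine ⟨fun j => Nat.rec 0 (fun j' ih => (hstep j' ih).choose) j, rfl, fun j => ?_⟩
    exact (hstep j _).choose_spec
  have hmono : StrictMono n := strictMono_nat_of_lt_succ fun j => (hnspec j).1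
  have hge : ∀ j, j ≤ n j := by
    intro j
    induction j with
    | zero => omega
    | succ j ih => have := (hnspec j).1; omega
  have hamon : ∀ i : ℕ, ∀ m m' : ℕ, m ≤ m' → c i * α i ^ m' ≤ c i * α i ^ m :=
    fun i m m' h => mul_le_mul_of_nonneg_left
      (pow_le_pow_of_le_one (hαm i).1.le (hαm i).2.le h) (hc i).le
  have blow : ∀ j i, i < j → c i * α i ^ (n j - n i) ≤ (1/4 : ℝ) ^ j := by
    intro j i h
    obtain ⟨j', rfl⟩ : ∃ j', j = j' + 1 := ⟨j - 1, by omega⟩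
    refine le_trans (hamon i _ _ ?_) ((hnspec j').2 i (by omega))
    exact Nat.sub_le_sub_left (hmono.monotone (by omega : i ≤ j')) _
  have bhigh : ∀ i j, j < i → c i * α i ^ (n i - n j) ≤ (1/4 : ℝ) ^ i := by
    intro i j h
    obtain ⟨i', rfl⟩ : ∃ i', i = i' + 1 := ⟨i - 1, by omega⟩
    refine le_trans (hamon _ _ _ ?_) ((hnspec i').2 (i' + 1) le_rfl)
    exact Nat.sub_le_sub_left (hmono.monotone (by omega : j ≤ i')) _
  have hgb : ∀ j, 1 ≤ j → c j * α j ^ (n j) ≤ (1/4 : ℝ) ^ j := by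
    intro j h
    obtain ⟨j', rfl⟩ : ∃ j', j = j' + 1 := ⟨j - 1, by omega⟩
    exact le_trans (hamon _ _ _ (Nat.sub_le _ _)) ((hnspec j').2 (j' + 1) le_rfl)
  set g : ℕ → X := fun i => B^[n i] (y i) with hgdef
  clear_value g
  have hgdef' : ∀ i, g i = B^[n i] (y i) := fun i => by rw [hgdef]
  have hgY : ∀ i, g i ∈ Y := fun i => by
    rw [hgdef']; exact lc_Bmem hBmaps (hyY i) _
  have hgC : ∀ i, g i ∈ opCinf A (D : Set X) := fun i => hYsub (hgY i)
  have half0 : (0:ℝ) ≤ 1/2 := by norm_num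
  have half1 : (1/2:ℝ) < 1 := by norm_num
  have hgnorm : ∀ i, 1 ≤ i → ‖g i‖ ≤ (1/2 : ℝ) ^ i := by
    intro i hi
    rw [hgdef']
    refine le_trans (hB i (n i) (le_trans hi (hge i))) (le_trans (hgb i hi) ?_)
    exact pow_le_pow_left₀ (by norm_num) (by norm_num) i
  have hgs : Summable g := by
    apply Summable.of_norm_bounded (g := fun i => (1 + ‖g 0‖) * (1/2 : ℝ) ^ i)
      ((summable_geometric_of_lt_one half0 half1).mul_left _)
    intro i
    rcases Nat.eq_zero_or_pos i with h | h
    · subst h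
      simp only [pow_zero, mul_one]
      linarith [norm_nonneg (g 0)]
    · refine le_trans (hgnorm i h) ?_
      have h2'' : (0:ℝ) ≤ (1/2:ℝ)^i := by positivity
      nlinarith [norm_nonneg (g 0)]
  set f : X := ∑' i, g i with hfdef
  clear_value f
  set T : ℕ → ℕ → X := fun j i =>
    if i < j then A^[n j - n i] (y i) else B^[n i - n j] (y i) with hTdef
  clear_value T
  have hTdef' : ∀ j i, T j i =
      if i < j then A^[n j - n i] (y i) else B^[n i - n j] (y i) := fun j i => by
    rw [hTdef]
  have hTg : ∀ j i, A^[n j] (g i) = T j i := by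
    intro j i
    rw [hTdef', hgdef']
    by_cases h : i < j
    · simp only [if_pos h]
      exact lc_AB_ge hBmaps h1 (hyY i) (n j) (n i) (hmono.monotone h.le)
    · simp only [if_neg h]
      exact lc_AB_le hBmaps h1 (hyY i) (n j) (n i) (hmono.monotone (not_lt.mp h))
  have hTjj : ∀ j, T j j = y j := by
    intro j; rw [hTdef']; simp
  have hTb : ∀ j i, i ≠ j → ‖T j i‖ ≤ 2 * (1/2 : ℝ) ^ j * (1/2) ^ i := by
    intro j i hij
    rcases lt_or_gt_of_ne hij with h | h
    · have e1 : ‖T j i‖ ≤ c i * α i ^ (n j - n i) := by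
        rw [hTdef']; simp only [if_pos h]
        exact hA i _ (by have := hmono h; omega)
      have e2 := blow j i h
      have e3 : ((1:ℝ)/4) ^ j ≤ 2 * (1/2) ^ j * (1/2) ^ i := by
        have h4 : ((1:ℝ)/4) ^ j = (1/2 : ℝ)^j * (1/2)^j := by
          rw [← mul_pow]; norm_num
        have h5 : ((1:ℝ)/2) ^ j ≤ (1/2 : ℝ) ^ i :=
          pow_le_pow_of_le_one half0 half1.le h.le
        have h6 : (0:ℝ) < (1/2:ℝ)^j := by positivity
        nlinarith
      linarith
    · have e1 : ‖T j i‖ ≤ c i * α i ^ (n i - n j) := by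
        rw [hTdef']; simp only [if_neg (by omega : ¬ i < j)]
        exact hB i _ (by have := hmono h; omega)
      have e2 := bhigh i j h
      have e3 : ((1:ℝ)/4) ^ i ≤ 2 * (1/2) ^ j * (1/2) ^ i := by
        have h4 : ((1:ℝ)/4) ^ i = (1/2 : ℝ)^i * (1/2)^i := by
          rw [← mul_pow]; norm_num
        have h5 : ((1:ℝ)/2) ^ i ≤ (1/2 : ℝ) ^ j :=
          pow_le_pow_of_le_one half0 half1.le h.le
        have h6 : (0:ℝ) < (1/2:ℝ)^i := by positivity
        nlinarith
      linarith
  have hTs : ∀ j, Summable (T j) := by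
    intro j
    apply Summable.of_norm_bounded
      (g := fun i => (2 * (1/2:ℝ)^j + ‖y j‖ * 2 ^ j) * (1/2) ^ i)
      ((summable_geometric_of_lt_one half0 half1).mul_left _)
    intro i
    by_cases h : i = j
    · subst h
      rw [hTjj]
      have h4 : ‖y i‖ * 2 ^ i * (1/2:ℝ) ^ i = ‖y i‖ := by
        rw [mul_assoc, ← mul_pow]; norm_num
      have h6 : (0:ℝ) ≤ (1/2:ℝ)^i * (1/2:ℝ)^i := by positivity
      nlinarith [norm_nonneg (y i)]
    · refine le_trans (hTb j i h) ?_
      have h5 : (0:ℝ) ≤ (1/2:ℝ)^i := by positivity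
      have h6 : (0:ℝ) ≤ ‖y j‖ * 2^j := by positivity
      exact mul_le_mul_of_nonneg_right (by linarith) h5
  set w : ℕ → X := fun j => ∑' i, T j i with hwdef
  clear_value w
  have hwdef' : ∀ j, w j = ∑' i, T j i := fun j => by rw [hwdef]
  have hfj : ∀ j, f ∈ opDom A (D : Set X) (n j) ∧ A^[n j] f = w j := by
    intro j
    rw [hfdef, hwdef']
    have hdom : ∀ i, g i ∈ opDom A (D : Set X) (n j) := fun i => lc_cinf_mem (hgC i) _
    exact lc_closed_lim hcl (n j)
      (S := fun m => ∑ i ∈ Finset.range m, g i)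
      (T := fun m => ∑ i ∈ Finset.range m, T j i)
      (fun m => (lc_sum hlin (n j) g hdom m).1)
      (fun m => by
        rw [(lc_sum hlin (n j) g hdom m).2]
        exact Finset.sum_congr rfl fun i _ => hTg j i)
      hgs.hasSum.tendsto_sum_nat
      (hTs j).hasSum.tendsto_sum_nat
  have hfC : f ∈ opCinf A (D : Set X) := by
    intro k
    exact (hfj (k + 1)).1 k (by have := hge (k + 1); omega)
  have hfnorm : 1 ≤ ‖f‖ := by
    have hsplit := Summable.sum_add_tsum_nat_add (f := g) 1 hgs
    simp only [Finset.sum_range_one] at hsplit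
    have htail : ‖∑' i, g (i + 1)‖ ≤ 1 := by
      have hhs : HasSum (fun i : ℕ => (1/2 : ℝ) ^ (i + 1)) 1 := by
        have h := (hasSum_geometric_of_lt_one half0 half1).mul_left (1/2 : ℝ)
        norm_num at h
        convert h using 2 with i
        rfl
        ring
      exact tsum_of_norm_bounded hhs fun i => hgnorm (i + 1) (by omega)
    have hg0 : 2 ≤ ‖g 0‖ := by
      have hgy : g 0 = ys := by rw [hgdef', hn0, Function.iterate_zero_apply, hy0]
      rw [hgy]; exact hys2
    have e1 : f - ∑' i, g (i + 1) = g 0 := by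
      rw [hfdef, ← hsplit]; abel
    have hle : ‖g 0‖ ≤ ‖f‖ + ‖∑' i, g (i + 1)‖ := by
      rw [← e1]; exact norm_sub_le _ _
    linarith
  have hfne : f ≠ 0 := by
    intro h; rw [h, norm_zero] at hfnorm; linarith
  have hwy : ∀ j, ‖w j - y j‖ ≤ 4 * (1/2 : ℝ) ^ j := by
    intro j
    have hsplit := Summable.tsum_eq_add_tsum_ite (hTs j) j
    have heq : w j - y j = ∑' i, if i = j then 0 else T j i := by
      rw [hwdef', hsplit, hTjj]; abel
    rw [heq]
    have hhs : HasSum (fun i : ℕ => (2 * (1/2:ℝ)^j) * (1/2)^i) (2 * (1/2:ℝ)^j * 2) := by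
      have h := (hasSum_geometric_of_lt_one half0 half1).mul_left (2 * (1/2:ℝ)^j)
      convert h using 1
      rfl
      norm_num
    have hle := tsum_of_norm_bounded (f := fun i => if i = j then 0 else T j i) hhs ?_
    · calc ‖∑' i, if i = j then 0 else T j i‖ ≤ 2 * (1/2:ℝ)^j * 2 := hle
      _ = 4 * (1/2:ℝ)^j := by ring
    · intro i
      by_cases h : i = j
      · simp only [if_pos h, norm_zero]; positivity
      · simp only [if_neg h]; exact hTb j i h
  refine ⟨f, hfC, hfne, ?_⟩
  rw [Metric.dense_iff]
  intro x r hr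
  obtain ⟨zz, hzball, k, hzk⟩ := Metric.dense_iff.mp hed x (r / 2) (by positivity)
  obtain ⟨m, hm⟩ := exists_pow_lt_of_lt_one (show (0:ℝ) < r / 8 by positivity) half1
  set j : ℕ := Nat.pair k m + 1 with hj
  have hyj : y j = e k := by rw [hj, hys', Nat.unpair_pair]
  have hjm : m ≤ j := le_trans (Nat.right_le_pair k m) (by omega)
  have hwj : dist (w j) (y j) < r / 2 := by
    rw [dist_eq_norm]
    refine lt_of_le_of_lt (hwy j) ?_
    have : (1/2:ℝ)^j ≤ (1/2)^m := pow_le_pow_of_le_one half0 half1.le hjm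
    nlinarith
  refine ⟨A^[n j] f, ?_, Set.mem_range_self (n j)⟩
  rw [Metric.mem_ball, (hfj j).2]
  have hd2 : dist (y j) x < r / 2 := by
    rw [hyj, hzk]
    exact Metric.mem_ball.mp hzball
  calc dist (w j) x ≤ dist (w j) (y j) + dist (y j) x := dist_triangle _ _ _
    _ < r / 2 + r / 2 := add_lt_add hwj hd2
    _ = r := by ring

end lcAux

/-- **Sufficient Condition for Linear Chaos.** -/
theorem sufficient_condition_for_linear_chaos
    {𝕜 X : Type*} [RCLike 𝕜] [NormedAddCommGroup X] [NormedSpace 𝕜 X]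
    [CompleteSpace X] [SeparableSpace X]
    (hinfdim : ¬ FiniteDimensional 𝕜 X)
    (D : Submodule 𝕜 X) (A : X → X)
    (hlin : IsLinearOn 𝕜 A (D : Set X))
    (hdd : Dense (D : Set X))
    (hcl : ∀ n : ℕ, 0 < n → ClosedPower A (D : Set X) n)
    (Y : Set X) (hYsub : Y ⊆ opCinf A (D : Set X)) (hYdense : Dense Y)
    (B : X → X) (hBmaps : Set.MapsTo B Y Y)
    (h1 : ∀ f ∈ Y, A (B f) = f)
    (h2 : ∀ f ∈ Y, ∃ α ∈ Set.Ioo (0 : ℝ) 1, ∃ c > 0,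
      ∀ n : ℕ, 0 < n → max ‖A^[n] f‖ ‖B^[n] f‖ ≤ c * α ^ n)
    :
    ChaoticOp A (D : Set X) := by
  obtain ⟨f, hfC, hfne, hfd⟩ :=
    lc_hypercyclic hinfdim hlin hcl hYsub hYdense hBmaps h1 h2
  exact ⟨⟨f, hfC, hfne, hfd⟩,
    lc_dense_periodic hlin hcl hYsub hYdense hBmaps h1 h2⟩
end

section
/- Construction of periodic points: Let X be a (real or complex) infinite-dimensional separable Banach space and let A be a densely defined linear operator in X such that every power A^n (n ∈ ℕ) is a closed operator. Suppose there exist a set Y ⊆ C^∞(A) dense in X and a mapping B : Y → Y such that ABf = f for every f ∈ Y, and for a given f ∈ Y there exist α ∈ (0,1) and c > 0 with max(‖A^n f‖, ‖B^n f‖) ≤ c·α^n for all n ∈ ℕ. Then for every N ∈ ℕ the series f_N := Σ_{m=1}^∞ A^{mN}f + f + Σ_{m=1}^∞ B^{mN}f converges in X, f_N ∈ D(A^N) with A^N f_N = f_N (i.e., f_N is an N-periodic point of A), and ‖f_N − f‖ ≤ 2c·α^N/(1 − α^N); in particular f_N → f as N → ∞. -/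
open Filter Topology TopologicalSpace

section Aux

variable {𝕜 X : Type*} [RCLike 𝕜] [NormedAddCommGroup X] [NormedSpace 𝕜 X]
variable {D : Submodule 𝕜 X} {A : X → X}

lemma aux_A_zero (hlin : IsLinearOn 𝕜 A (D : Set X)) : A (0 : X) = 0 := by
  simpa using hlin.2 0 0 D.zero_mem

lemma aux_iter_zero (hlin : IsLinearOn 𝕜 A (D : Set X)) (k : ℕ) :
    A^[k] (0 : X) = 0 := by
  induction k with
  | zero => simp
  | succ n ih => rw [Function.iterate_succ_apply', ih, aux_A_zero hlin]

lemma aux_cinf_zero (hlin : IsLinearOn 𝕜 A (D : Set X)) :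
    (0 : X) ∈ opCinf A (D : Set X) := by
  intro k
  rw [aux_iter_zero hlin]
  exact D.zero_mem

lemma aux_iterate_mem_cinf {x : X} (hx : x ∈ opCinf A (D : Set X)) (k : ℕ) :
    A^[k] x ∈ opCinf A (D : Set X) := fun j => by
  rw [← Function.iterate_add_apply]
  exact hx (j + k)

lemma aux_iter_add (hlin : IsLinearOn 𝕜 A (D : Set X)) {x y : X}
    (hx : x ∈ opCinf A (D : Set X)) (hy : y ∈ opCinf A (D : Set X)) (n : ℕ) :
    A^[n] (x + y) = A^[n] x + A^[n] y := by
  induction n with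
  | zero => simp
  | succ n ih =>
    rw [Function.iterate_succ_apply', ih, Function.iterate_succ_apply' A n x,
        Function.iterate_succ_apply' A n y]
    exact hlin.1 _ (hx n) _ (hy n)

lemma aux_add_mem (hlin : IsLinearOn 𝕜 A (D : Set X)) {x y : X}
    (hx : x ∈ opCinf A (D : Set X)) (hy : y ∈ opCinf A (D : Set X)) :
    x + y ∈ opCinf A (D : Set X) := fun k => by
  rw [aux_iter_add hlin hx hy]
  exact D.add_mem (hx k) (hy k)

lemma aux_sum (hlin : IsLinearOn 𝕜 A (D : Set X)) {ι : Type*} (s : Finset ι)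
    (g : ι → X) (hg : ∀ i ∈ s, g i ∈ opCinf A (D : Set X)) :
    (∑ i ∈ s, g i) ∈ opCinf A (D : Set X) ∧
      ∀ n : ℕ, A^[n] (∑ i ∈ s, g i) = ∑ i ∈ s, A^[n] (g i) := by
  induction s using Finset.cons_induction with
  | empty =>
    simp only [Finset.sum_empty]
    exact ⟨aux_cinf_zero hlin, fun n => aux_iter_zero hlin n⟩
  | cons a s ha ih =>
    have hga := hg a (Finset.mem_cons_self a s)
    obtain ⟨hm, hiter⟩ := ih (fun i hi => hg i (Finset.mem_cons_of_mem hi))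
    simp only [Finset.sum_cons]
    exact ⟨aux_add_mem hlin hga hm, fun n => by
      rw [aux_iter_add hlin hga hm, hiter n]⟩

lemma aux_AB {Y : Set X} {B : X → X} (hBmaps : Set.MapsTo B Y Y)
    (h1 : ∀ f ∈ Y, A (B f) = f) {g : X} (hg : g ∈ Y) (k : ℕ) :
    A^[k] (B^[k] g) = g := by
  induction k with
  | zero => simp
  | succ n ih =>
    have hmem : B^[n] g ∈ Y := (hBmaps.iterate n) hg
    rw [Function.iterate_succ_apply A, Function.iterate_succ_apply' B,
        h1 _ hmem, ih]

end Aux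

/-- **Construction of periodic points.** -/
theorem construction_of_periodic_points
    {𝕜 X : Type*} [RCLike 𝕜] [NormedAddCommGroup X] [NormedSpace 𝕜 X]
    [CompleteSpace X] [SeparableSpace X]
    (hinfdim : ¬ FiniteDimensional 𝕜 X)
    (D : Submodule 𝕜 X) (A : X → X)
    (hlin : IsLinearOn 𝕜 A (D : Set X))
    (hdd : Dense (D : Set X))
    (hcl : ∀ n : ℕ, 0 < n → ClosedPower A (D : Set X) n)
    (Y : Set X) (hYsub : Y ⊆ opCinf A (D : Set X)) (hYdense : Dense Y)
    (B : X → X) (hBmaps : Set.MapsTo B Y Y)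
    (h1 : ∀ f ∈ Y, A (B f) = f)
    (f : X) (hf : f ∈ Y) (α c : ℝ) (hα : α ∈ Set.Ioo (0 : ℝ) 1) (hc : 0 < c)
    (h2 : ∀ n : ℕ, 0 < n → max ‖A^[n] f‖ ‖B^[n] f‖ ≤ c * α ^ n) :
    (∀ N : ℕ, 0 < N →
      Summable (fun m : ℕ => A^[(m + 1) * N] f) ∧
      Summable (fun m : ℕ => B^[(m + 1) * N] f) ∧
      ((∑' m : ℕ, A^[(m + 1) * N] f) + f + ∑' m : ℕ, B^[(m + 1) * N] f) ∈ opDom A (D : Set X) N ∧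
      A^[N] ((∑' m : ℕ, A^[(m + 1) * N] f) + f + ∑' m : ℕ, B^[(m + 1) * N] f) = (∑' m : ℕ, A^[(m + 1) * N] f) + f + ∑' m : ℕ, B^[(m + 1) * N] f ∧
      ‖((∑' m : ℕ, A^[(m + 1) * N] f) + f + ∑' m : ℕ, B^[(m + 1) * N] f) - f‖ ≤ 2 * c * α ^ N / (1 - α ^ N)) ∧
    Filter.Tendsto (fun N : ℕ => (∑' m : ℕ, A^[(m + 1) * N] f) + f + ∑' m : ℕ, B^[(m + 1) * N] f)
      Filter.atTop (nhds f) := by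
  obtain ⟨hα0, hα1⟩ := hα
  have hfc : f ∈ opCinf A (D : Set X) := hYsub hf
  have main : ∀ N : ℕ, 0 < N →
      Summable (fun m : ℕ => A^[(m + 1) * N] f) ∧
      Summable (fun m : ℕ => B^[(m + 1) * N] f) ∧
      ((∑' m : ℕ, A^[(m + 1) * N] f) + f + ∑' m : ℕ, B^[(m + 1) * N] f) ∈ opDom A (D : Set X) N ∧
      A^[N] ((∑' m : ℕ, A^[(m + 1) * N] f) + f + ∑' m : ℕ, B^[(m + 1) * N] f) = (∑' m : ℕ, A^[(m + 1) * N] f) + f + ∑' m : ℕ, B^[(m + 1) * N] f ∧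
      ‖((∑' m : ℕ, A^[(m + 1) * N] f) + f + ∑' m : ℕ, B^[(m + 1) * N] f) - f‖ ≤ 2 * c * α ^ N / (1 - α ^ N) := by
    intro N hN
    set r : ℝ := α ^ N with hr
    have hr0 : 0 < r := pow_pos hα0 N
    have hr1 : r < 1 := pow_lt_one₀ hα0.le hα1 hN.ne'
    set gA : ℕ → X := fun m => A^[(m + 1) * N] f with hgA
    set gB : ℕ → X := fun m => B^[(m + 1) * N] f with hgB
    have heq : ∀ m : ℕ, α ^ ((m + 1) * N) = r ^ (m + 1) := by
      intro m; rw [hr, mul_comm, pow_mul]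
    have hbA : ∀ m : ℕ, ‖gA m‖ ≤ c * r * r ^ m := by
      intro m
      have h := h2 ((m + 1) * N) (by positivity)
      have h' : ‖gA m‖ ≤ c * α ^ ((m + 1) * N) := le_trans (le_max_left _ _) h
      rw [heq m, pow_succ] at h'
      calc ‖gA m‖ ≤ c * (r ^ m * r) := h'
        _ = c * r * r ^ m := by ring
    have hbB : ∀ m : ℕ, ‖gB m‖ ≤ c * r * r ^ m := by
      intro m
      have h := h2 ((m + 1) * N) (by positivity)
      have h' : ‖gB m‖ ≤ c * α ^ ((m + 1) * N) := le_trans (le_max_right _ _) h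
      rw [heq m, pow_succ] at h'
      calc ‖gB m‖ ≤ c * (r ^ m * r) := h'
        _ = c * r * r ^ m := by ring
    have hgeo : Summable (fun m : ℕ => c * r * r ^ m) :=
      (summable_geometric_of_lt_one hr0.le hr1).mul_left _
    have hSA : Summable gA := Summable.of_norm_bounded hgeo hbA
    have hSB : Summable gB := Summable.of_norm_bounded hgeo hbB
    refine ⟨hSA, hSB, ?_⟩
    -- geometric bound on the tsums
    have htgeo : ∑' m : ℕ, c * r * r ^ m = c * r / (1 - r) := by
      rw [tsum_mul_left, tsum_geometric_of_lt_one hr0.le hr1, div_eq_mul_inv]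
    have hnormA : ‖∑' m : ℕ, gA m‖ ≤ c * r / (1 - r) := by
      have hsn : Summable (fun m : ℕ => ‖gA m‖) :=
        Summable.of_nonneg_of_le (fun m => norm_nonneg _) hbA hgeo
      calc ‖∑' m : ℕ, gA m‖ ≤ ∑' m : ℕ, ‖gA m‖ := norm_tsum_le_tsum_norm hsn
        _ ≤ ∑' m : ℕ, c * r * r ^ m := Summable.tsum_le_tsum hbA hsn hgeo
        _ = c * r / (1 - r) := htgeo
    have hnormB : ‖∑' m : ℕ, gB m‖ ≤ c * r / (1 - r) := by
      have hsn : Summable (fun m : ℕ => ‖gB m‖) :=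
        Summable.of_nonneg_of_le (fun m => norm_nonneg _) hbB hgeo
      calc ‖∑' m : ℕ, gB m‖ ≤ ∑' m : ℕ, ‖gB m‖ := norm_tsum_le_tsum_norm hsn
        _ ≤ ∑' m : ℕ, c * r * r ^ m := Summable.tsum_le_tsum hbB hsn hgeo
        _ = c * r / (1 - r) := htgeo
    -- memberships in C^∞
    have hgAmem : ∀ m : ℕ, gA m ∈ opCinf A (D : Set X) := fun m =>
      aux_iterate_mem_cinf hfc _
    have hgBmem : ∀ m : ℕ, gB m ∈ opCinf A (D : Set X) := fun m =>
      hYsub ((hBmaps.iterate _) hf)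
    -- partial sums
    set u : ℕ → X := fun K => ∑ m ∈ Finset.range K, gA m with hu
    set v : ℕ → X := fun K => ∑ m ∈ Finset.range K, gB m with hv
    have humem : ∀ K, u K ∈ opCinf A (D : Set X) := fun K =>
      (aux_sum hlin _ gA (fun i _ => hgAmem i)).1
    have hvmem : ∀ K, v K ∈ opCinf A (D : Set X) := fun K =>
      (aux_sum hlin _ gB (fun i _ => hgBmem i)).1
    set g : ℕ → X := fun K => u K + f + v K with hgdef
    have hgmem : ∀ K, g K ∈ opCinf A (D : Set X) := fun K =>
      aux_add_mem hlin (aux_add_mem hlin (humem K) hfc) (hvmem K)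
    -- action of A^[N] on the terms
    have hAgA : ∀ m : ℕ, A^[N] (gA m) = gA (m + 1) := by
      intro m
      show A^[N] (A^[(m + 1) * N] f) = A^[(m + 1 + 1) * N] f
      rw [← Function.iterate_add_apply]
      congr 1
      ring
    have hAgB : ∀ m : ℕ, A^[N] (gB m) = B^[m * N] f := by
      intro m
      have h3 : gB m = B^[N] (B^[m * N] f) := by
        show B^[(m + 1) * N] f = _
        rw [← Function.iterate_add_apply]
        congr 1
        ring
      rw [h3, aux_AB hBmaps h1 ((hBmaps.iterate _) hf) N]
    have hAf : A^[N] f = gA 0 := by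
      show _ = A^[(0 + 1) * N] f
      congr 1
      ring
    have hAg : ∀ K, A^[N] (g K) =
        (∑ m ∈ Finset.range (K + 1), gA m) + ∑ m ∈ Finset.range K, B^[m * N] f := by
      intro K
      have e1 : A^[N] (g K) = A^[N] (u K + f) + A^[N] (v K) :=
        aux_iter_add hlin (aux_add_mem hlin (humem K) hfc) (hvmem K) N
      have e2 : A^[N] (u K + f) = A^[N] (u K) + A^[N] f :=
        aux_iter_add hlin (humem K) hfc N
      have e3 : A^[N] (u K) = ∑ m ∈ Finset.range K, A^[N] (gA m) :=
        (aux_sum hlin _ gA (fun i _ => hgAmem i)).2 N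
      have e4 : A^[N] (v K) = ∑ m ∈ Finset.range K, A^[N] (gB m) :=
        (aux_sum hlin _ gB (fun i _ => hgBmem i)).2 N
      rw [e1, e2, e3, e4, Finset.sum_range_succ' gA K, hAf,
          Finset.sum_congr rfl fun m _ => hAgA m,
          Finset.sum_congr rfl fun m _ => hAgB m]
    -- limits
    set SA : X := ∑' m : ℕ, gA m with hSAdef
    set SB : X := ∑' m : ℕ, gB m with hSBdef
    have hulim : Tendsto u atTop (𝓝 SA) := hSA.hasSum.tendsto_sum_nat
    have hvlim : Tendsto v atTop (𝓝 SB) := hSB.hasSum.tendsto_sum_nat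
    have hglim : Tendsto g atTop (𝓝 (SA + f + SB)) :=
      (hulim.add tendsto_const_nhds).add hvlim
    have hh : Summable (fun m : ℕ => B^[m * N] f) := by
      apply (summable_nat_add_iff 1).mp
      exact hSB
    have hhsum : ∑' m : ℕ, B^[m * N] f = f + SB := by
      rw [Summable.tsum_eq_zero_add hh]
      congr 1
      simp
    have hAglim : Tendsto (fun K => A^[N] (g K)) atTop (𝓝 (SA + f + SB)) := by
      have l1 : Tendsto (fun K => ∑ m ∈ Finset.range (K + 1), gA m) atTop (𝓝 SA) :=
        hulim.comp (tendsto_add_atTop_nat 1)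
      have l2 : Tendsto (fun K => ∑ m ∈ Finset.range K, B^[m * N] f) atTop
          (𝓝 (f + SB)) := hhsum ▸ hh.hasSum.tendsto_sum_nat
      have := l1.add l2
      rw [← add_assoc] at this
      exact this.congr fun K => (hAg K).symm
    have hcls := hcl N hN
    have hmemdom : ∀ K, g K ∈ opDom A (D : Set X) N := fun K k _ => hgmem K k
    have hpair : Tendsto (fun K => (g K, A^[N] (g K))) atTop
        (𝓝 (SA + f + SB, SA + f + SB)) := hglim.prodMk_nhds hAglim
    have hfinal : (SA + f + SB, SA + f + SB) ∈
        {p : X × X | p.1 ∈ opDom A (D : Set X) N ∧ p.2 = A^[N] p.1} :=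
      hcls.mem_of_tendsto hpair (Filter.Eventually.of_forall fun K => ⟨hmemdom K, rfl⟩)
    refine ⟨hfinal.1, hfinal.2.symm, ?_⟩
    have hdiff : SA + f + SB - f = SA + SB := by abel
    calc ‖SA + f + SB - f‖ = ‖SA + SB‖ := by rw [hdiff]
      _ ≤ ‖SA‖ + ‖SB‖ := norm_add_le _ _
      _ ≤ c * r / (1 - r) + c * r / (1 - r) := add_le_add hnormA hnormB
      _ = 2 * c * r / (1 - r) := by ring
  refine ⟨main, ?_⟩
  rw [tendsto_iff_norm_sub_tendsto_zero]
  have hlim0 : Tendsto (fun N : ℕ => 2 * c * α ^ N / (1 - α ^ N)) atTop (𝓝 0) := by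
    have h1 : Tendsto (fun N : ℕ => α ^ N) atTop (𝓝 0) :=
      tendsto_pow_atTop_nhds_zero_of_lt_one hα0.le hα1
    have h2' : Tendsto (fun N : ℕ => 2 * c * α ^ N / (1 - α ^ N)) atTop
        (𝓝 (2 * c * 0 / (1 - 0))) :=
      (tendsto_const_nhds.mul h1).div (tendsto_const_nhds.sub h1) (by norm_num)
    simpa using h2'
  apply squeeze_zero' (Filter.Eventually.of_forall fun N => norm_nonneg _) _ hlim0
  filter_upwards [eventually_gt_atTop 0] with N hN
  exact (main N hN).2.2.2.2
end

section
/- Hypercyclicity of the inverse: Let X be a (real or complex) infinite-dimensional separable Banach space and let A be a densely defined linear operator in X such that every power A^n (n ∈ ℕ) is a closed operator, and suppose there exist a set Y ⊆ C^∞(A) dense in X and a mapping B : Y → Y such that (1) ABf = f for every f ∈ Y and (2) for every f ∈ Y, A^n f → 0 and B^n f → 0 as n → ∞. If A is injective, has range R(A) = X, and its inverse A^{-1} is a bounded linear operator on X, then A^{-1} is hypercyclic. -/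
open Filter Topology TopologicalSpace

/-- **Hypercyclicity of the inverse.** -/
theorem hypercyclicity_of_inverse
    {𝕜 X : Type*} [RCLike 𝕜] [NormedAddCommGroup X] [NormedSpace 𝕜 X]
    [CompleteSpace X] [SeparableSpace X]
    (hinfdim : ¬ FiniteDimensional 𝕜 X)
    (D : Submodule 𝕜 X) (A : X → X)
    (hlin : IsLinearOn 𝕜 A (D : Set X))
    (hdd : Dense (D : Set X))
    (hcl : ∀ n : ℕ, 0 < n → ClosedPower A (D : Set X) n)
    (Y : Set X) (hYsub : Y ⊆ opCinf A (D : Set X)) (hYdense : Dense Y)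
    (B : X → X) (hBmaps : Set.MapsTo B Y Y)
    (h1 : ∀ f ∈ Y, A (B f) = f)
    (h2 : ∀ f ∈ Y, Filter.Tendsto (fun n : ℕ => A^[n] f) Filter.atTop (nhds 0) ∧
      Filter.Tendsto (fun n : ℕ => B^[n] f) Filter.atTop (nhds 0))
    (hinj : Set.InjOn A (D : Set X))
    (hsurj : A '' (D : Set X) = Set.univ)
    (Ainv : X →L[𝕜] X)
    (hAinv : ∀ x ∈ (D : Set X), Ainv (A x) = x) :
    HypercyclicOp (⇑Ainv) (Set.univ : Set X) := by
  classical
  have hnt : Nontrivial X := by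
    rcases subsingleton_or_nontrivial X with h | h
    · refine absurd ⟨?_⟩ hinfdim
      rw [Subsingleton.elim (⊤ : Submodule 𝕜 X) ⊥]
      exact Submodule.fg_bot
    · exact h
  -- membership of Y in D
  have hY_D : ∀ f ∈ Y, f ∈ (D : Set X) := fun f hf => by
    have := hYsub hf 0; simpa using this
  -- Ainv agrees with B on Y
  have hAinvB : ∀ f ∈ Y, Ainv f = B f := by
    intro f hf
    have hBf : B f ∈ Y := hBmaps hf
    calc Ainv f = Ainv (A (B f)) := by rw [h1 f hf]
      _ = B f := hAinv _ (hY_D _ hBf)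
  have hAinvIter : ∀ f ∈ Y, ∀ n : ℕ, Ainv^[n] f = B^[n] f := by
    intro f hf n
    induction n with
    | zero => simp
    | succ n ih =>
        rw [Function.iterate_succ_apply', Function.iterate_succ_apply', ih,
          hAinvB _ (hBmaps.iterate n hf)]
  -- Ainv^[n] is a left inverse of A^[n] on C^∞(A)
  have hRI : ∀ z ∈ opCinf A (D : Set X), ∀ n : ℕ, Ainv^[n] (A^[n] z) = z := by
    intro z hz n
    induction n with
    | zero => simp
    | succ n ih =>
        rw [Function.iterate_succ_apply, Function.iterate_succ_apply',
          hAinv _ (hz n), ih]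
  -- additivity of iterates of Ainv
  have hadd : ∀ (n : ℕ) (a b : X), Ainv^[n] (a + b) = Ainv^[n] a + Ainv^[n] b := by
    intro n
    induction n with
    | zero => intro a b; simp
    | succ n ih =>
        intro a b
        simp only [Function.iterate_succ_apply, map_add, ih]
  obtain ⟨Bas, hBc, -, hBasis⟩ := TopologicalSpace.exists_countable_basis X
  set S : Set (Set X) := {V ∈ Bas | V.Nonempty} with hS
  have hSc : S.Countable := hBc.mono (Set.sep_subset _ _)
  haveI := hSc.to_subtype
  set O : S → Set X := fun V => ⋃ n : ℕ, (Ainv^[n]) ⁻¹' V.1 with hO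
  have hOopen : ∀ V, IsOpen (O V) := fun V =>
    isOpen_iUnion fun n => (hBasis.isOpen V.2.1).preimage (Ainv.continuous.iterate n)
  have hOdense : ∀ V : S, Dense (O V) := by
    rintro ⟨V, hVB, hVne⟩
    rw [dense_iff_inter_open]
    intro U hU hUne
    obtain ⟨y, hyU, hyY⟩ := hYdense.inter_open_nonempty U hU hUne
    obtain ⟨z, hzV, hzY⟩ := hYdense.inter_open_nonempty V (hBasis.isOpen hVB) hVne
    have hx : Filter.Tendsto (fun n : ℕ => y + A^[n] z) Filter.atTop (nhds y) := by
      simpa using tendsto_const_nhds.add (h2 z hzY).1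
    have hg : Filter.Tendsto (fun n : ℕ => Ainv^[n] (y + A^[n] z)) Filter.atTop
        (nhds z) := by
      have heq : ∀ n : ℕ, Ainv^[n] (y + A^[n] z) = B^[n] y + z := by
        intro n
        rw [hadd, hAinvIter y hyY, hRI z (hYsub hzY)]
      simp only [heq]
      simpa using (h2 y hyY).2.add (tendsto_const_nhds : Filter.Tendsto
        (fun _ : ℕ => z) Filter.atTop (nhds z))
    have h1' : ∀ᶠ n in Filter.atTop, (y + A^[n] z) ∈ U :=
      hx.eventually (hU.eventually_mem hyU)
    have h2' : ∀ᶠ n in Filter.atTop, Ainv^[n] (y + A^[n] z) ∈ V :=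
      hg.eventually ((hBasis.isOpen hVB).eventually_mem hzV)
    obtain ⟨n, hnU, hnV⟩ := (h1'.and h2').exists
    exact ⟨y + A^[n] z, hnU, Set.mem_iUnion.2 ⟨n, hnV⟩⟩
  have hdense : Dense (⋂ V : S, O V) := dense_iInter_of_isOpen hOopen hOdense
  obtain ⟨f, hf⟩ := hdense.nonempty
  have hforb : Dense (Set.range fun n : ℕ => Ainv^[n] f) := by
    rw [dense_iff_inter_open]
    intro U hU hUne
    obtain ⟨x, hxU⟩ := hUne
    obtain ⟨V, hVB, hxV, hVU⟩ := hBasis.exists_subset_of_mem_open hxU hU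
    have hVS : V ∈ S := ⟨hVB, ⟨x, hxV⟩⟩
    have := Set.mem_iInter.1 hf ⟨V, hVS⟩
    obtain ⟨n, hn⟩ := Set.mem_iUnion.1 this
    exact ⟨Ainv^[n] f, hVU hn, ⟨n, rfl⟩⟩
  have hfne : f ≠ 0 := by
    rintro rfl
    have hz : ∀ n : ℕ, Ainv^[n] (0 : X) = 0 := fun n =>
      Function.iterate_fixed (map_zero Ainv) n
    obtain ⟨x, hx⟩ := exists_ne (0 : X)
    have : x ∈ closure (Set.range fun n : ℕ => Ainv^[n] (0 : X)) := hforb _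
    have hsub : (Set.range fun n : ℕ => Ainv^[n] (0 : X)) ⊆ {0} := by
      rintro _ ⟨n, rfl⟩; simp [hz]
    have := (closure_minimal hsub isClosed_singleton) this
    exact hx this
  exact ⟨f, fun k => trivial, hfne, hforb⟩
end

section
/- Chaoticity of the inverse: Let X be a (real or complex) infinite-dimensional separable Banach space and let A be a densely defined linear operator in X such that every power A^n (n ∈ ℕ) is a closed operator, and suppose there exist a set Y ⊆ C^∞(A) dense in X and a mapping B : Y → Y such that (1) ABf = f for every f ∈ Y and (2) for every f ∈ Y there exist α = α(f) ∈ (0,1) and c = c(f,α) > 0 with max(‖A^n f‖, ‖B^n f‖) ≤ c·α^n for all n ∈ ℕ. If A is injective, has range R(A) = X, and its inverse A^{-1} is a bounded linear operator on X, then A^{-1} is chaotic. -/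
open Filter Topology TopologicalSpace

/-- **Chaoticity of the inverse.** -/
theorem chaoticity_of_inverse
    {𝕜 X : Type*} [RCLike 𝕜] [NormedAddCommGroup X] [NormedSpace 𝕜 X]
    [CompleteSpace X] [SeparableSpace X]
    (hinfdim : ¬ FiniteDimensional 𝕜 X)
    (D : Submodule 𝕜 X) (A : X → X)
    (hlin : IsLinearOn 𝕜 A (D : Set X))
    (hdd : Dense (D : Set X))
    (hcl : ∀ n : ℕ, 0 < n → ClosedPower A (D : Set X) n)
    (Y : Set X) (hYsub : Y ⊆ opCinf A (D : Set X)) (hYdense : Dense Y)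
    (B : X → X) (hBmaps : Set.MapsTo B Y Y)
    (h1 : ∀ f ∈ Y, A (B f) = f)
    (h2 : ∀ f ∈ Y, ∃ α ∈ Set.Ioo (0 : ℝ) 1, ∃ c > 0,
      ∀ n : ℕ, 0 < n → max ‖A^[n] f‖ ‖B^[n] f‖ ≤ c * α ^ n)
    (hinj : Set.InjOn A (D : Set X))
    (hsurj : A '' (D : Set X) = Set.univ)
    (Ainv : X →L[𝕜] X)
    (hAinv : ∀ x ∈ (D : Set X), Ainv (A x) = x) :
    ChaoticOp (⇑Ainv) (Set.univ : Set X) := by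
  classical
  have hnt : Nontrivial X := by
    by_contra h
    rw [not_nontrivial_iff_subsingleton] at h
    exact hinfdim (Module.Finite.of_basis (Module.Basis.empty (ι := Empty) (R := 𝕜) X))
  have hYD : Y ⊆ (D : Set X) := fun f hf => by simpa using hYsub hf 0
  have hCinf_iter : ∀ f ∈ opCinf A (D : Set X), ∀ m : ℕ,
      A^[m] f ∈ opCinf A (D : Set X) := by
    intro f hf m k
    rw [← Function.iterate_add_apply]
    exact hf (k + m)
  have hpow : ∀ n : ℕ, ⇑(Ainv ^ n) = (⇑Ainv)^[n] := fun n =>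
    FunLike.coe_pow_eq_iterate Ainv n
  have hcancel : ∀ f ∈ opCinf A (D : Set X), ∀ n : ℕ,
      (⇑Ainv)^[n] (A^[n] f) = f := by
    intro f hf n
    induction n with
    | zero => simp
    | succ n ih =>
      rw [Function.iterate_succ_apply' A, Function.iterate_succ_apply (⇑Ainv),
        hAinv _ (hf n), ih]
  have hAinvY : ∀ f ∈ Y, Ainv f = B f := by
    intro f hf
    have h := hAinv (B f) (hYD (hBmaps hf))
    rwa [h1 f hf] at h
  have hBiter : ∀ f ∈ Y, ∀ n : ℕ, (⇑Ainv)^[n] f = B^[n] f := by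
    intro f hf n
    induction n with
    | zero => rfl
    | succ n ih =>
      rw [Function.iterate_succ_apply' (⇑Ainv), Function.iterate_succ_apply' B, ih]
      exact hAinvY _ (hBmaps.iterate n hf)
  have htend : ∀ f ∈ Y,
      Filter.Tendsto (fun n : ℕ => max ‖A^[n] f‖ ‖(⇑Ainv)^[n] f‖) atTop (𝓝 0) := by
    intro f hf
    obtain ⟨α, hα, c, hc, hb2⟩ := h2 f hf
    have hle : ∀ᶠ n : ℕ in atTop,
        max ‖A^[n] f‖ ‖(⇑Ainv)^[n] f‖ ≤ c * α ^ n := by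
      filter_upwards [Filter.eventually_ge_atTop 1] with n hn
      rw [hBiter f hf n]
      exact hb2 n hn
    have hg0 : Filter.Tendsto (fun n : ℕ => c * α ^ n) atTop (𝓝 0) := by
      simpa using (tendsto_pow_atTop_nhds_zero_of_lt_one hα.1.le hα.2).const_mul c
    exact squeeze_zero'
      (Filter.Eventually.of_forall fun n => le_max_of_le_left (norm_nonneg _)) hle hg0
  haveI : SecondCountableTopology X := UniformSpace.secondCountable_of_separable X
  obtain ⟨bas, hbc, hbne, hbas⟩ := TopologicalSpace.exists_countable_basis X
  set G : Set X → Set X := fun V => ⋃ n : ℕ, (⇑Ainv)^[n] ⁻¹' V with hGdef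
  have hGopen : ∀ V ∈ bas, IsOpen (G V) := by
    intro V hV
    refine isOpen_iUnion fun n => (hbas.isOpen hV).preimage ?_
    rw [← hpow n]
    exact (Ainv ^ n).continuous
  have hGdense : ∀ V ∈ bas, Dense (G V) := by
    intro V hV
    rw [dense_iff_inter_open]
    intro U hU hUne
    obtain ⟨f, hfY, hfU⟩ := hYdense.exists_mem_open hU hUne
    have hVne : V.Nonempty := by
      rcases Set.eq_empty_or_nonempty V with h | h
      · exact absurd (h ▸ hV) hbne
      · exact h
    obtain ⟨g, hgY, hgV⟩ := hYdense.exists_mem_open (hbas.isOpen hV) hVne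
    obtain ⟨ε, hε, hballU⟩ := Metric.isOpen_iff.1 hU f hfU
    obtain ⟨δ, hδ, hballV⟩ := Metric.isOpen_iff.1 (hbas.isOpen hV) g hgV
    obtain ⟨n, hnf, hng⟩ := (((htend f hfY).eventually (gt_mem_nhds hδ)).and
      ((htend g hgY).eventually (gt_mem_nhds hε))).exists
    refine ⟨f + A^[n] g, ?_, ?_⟩
    · apply hballU
      rw [Metric.mem_ball, dist_eq_norm, add_sub_cancel_left]
      exact lt_of_le_of_lt (le_max_left _ _) hng
    · refine Set.mem_iUnion.2 ⟨n, ?_⟩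
      have hadd : (⇑Ainv)^[n] (f + A^[n] g)
          = (⇑Ainv)^[n] f + (⇑Ainv)^[n] (A^[n] g) := by
        rw [← hpow n]; exact map_add _ _ _
      rw [hcancel g (hYsub hgY) n] at hadd
      have : (⇑Ainv)^[n] (f + A^[n] g) ∈ Metric.ball g δ := by
        rw [hadd, Metric.mem_ball, dist_eq_norm, add_sub_cancel_right]
        exact lt_of_le_of_lt (le_max_right _ _) hnf
      exact hballV this
  have hGint : Dense (⋂₀ (G '' bas)) := by
    refine dense_sInter_of_isOpen ?_ (hbc.image G) ?_
    · rintro s ⟨V, hV, rfl⟩; exact hGopen V hV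
    · rintro s ⟨V, hV, rfl⟩; exact hGdense V hV
  obtain ⟨y, hy⟩ := exists_ne (0 : X)
  have hyn : (0 : ℝ) < ‖y‖ := norm_pos_iff.2 hy
  obtain ⟨x0, hx0mem, hx0ball⟩ := hGint.exists_mem_open Metric.isOpen_ball
    ⟨y, Metric.mem_ball_self hyn⟩
  have hx0ne : x0 ≠ 0 := by
    intro h
    rw [h, Metric.mem_ball, dist_zero_left] at hx0ball
    exact lt_irrefl _ hx0ball
  have horb : Dense (Set.range fun n : ℕ => (⇑Ainv)^[n] x0) := by
    rw [dense_iff_inter_open]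
    intro U hU hUne
    obtain ⟨z, hz⟩ := hUne
    obtain ⟨V, hV, hzV, hVU⟩ := hbas.exists_subset_of_mem_open hz hU
    have hx0G : x0 ∈ G V := hx0mem _ (Set.mem_image_of_mem G hV)
    obtain ⟨n, hn⟩ := Set.mem_iUnion.1 hx0G
    exact ⟨(⇑Ainv)^[n] x0, hVU hn, ⟨n, rfl⟩⟩
  constructor
  · exact ⟨x0, fun _ => Set.mem_univ _, hx0ne, horb⟩
  · have hsub : Y ⊆ closure {f | PeriodicPt (⇑Ainv) (Set.univ : Set X) f} := by
      intro f hfY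
      rw [Metric.mem_closure_iff]
      intro ε hε
      obtain ⟨α, hα, c, hc, hb2⟩ := h2 f hfY
      have hev : ∀ᶠ n : ℕ in atTop, α ^ n < min (1/2) (ε / (4 * c + 1)) :=
        (tendsto_pow_atTop_nhds_zero_of_lt_one hα.1.le hα.2).eventually
          (gt_mem_nhds (lt_min (by norm_num) (by positivity)))
      obtain ⟨N, hNs, hN1⟩ := (hev.and (Filter.eventually_ge_atTop 1)).exists
      set r : ℝ := α ^ N with hr
      have hr0 : 0 < r := pow_pos hα.1 N
      have hr1 : r < 1/2 := hNs.trans_le (min_le_left _ _)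
      have hrε : r < ε / (4 * c + 1) := hNs.trans_le (min_le_right _ _)
      set a : ℕ → X := fun j => A^[(j+1)*N] f with ha
      set bb : ℕ → X := fun j => (⇑Ainv)^[(j+1)*N] f with hbb
      have hNpos : ∀ j : ℕ, 0 < (j+1)*N := fun j => Nat.mul_pos j.succ_pos hN1
      have heq : ∀ j : ℕ, α ^ ((j+1)*N) = r ^ (j+1) := fun j => by
        rw [hr, ← pow_mul, mul_comm]
      have hbda : ∀ j : ℕ, ‖a j‖ ≤ c * r ^ (j+1) := by
        intro j
        have h := hb2 ((j+1)*N) (hNpos j)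
        calc ‖a j‖ ≤ max ‖A^[(j+1)*N] f‖ ‖B^[(j+1)*N] f‖ := le_max_left _ _
          _ ≤ c * α ^ ((j+1)*N) := h
          _ = c * r ^ (j+1) := by rw [heq j]
      have hbdb : ∀ j : ℕ, ‖bb j‖ ≤ c * r ^ (j+1) := by
        intro j
        have h := hb2 ((j+1)*N) (hNpos j)
        calc ‖bb j‖ = ‖B^[(j+1)*N] f‖ := by
              show ‖(⇑Ainv)^[(j+1)*N] f‖ = ‖B^[(j+1)*N] f‖
              rw [hBiter f hfY]
          _ ≤ max ‖A^[(j+1)*N] f‖ ‖B^[(j+1)*N] f‖ := le_max_right _ _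
          _ ≤ c * α ^ ((j+1)*N) := h
          _ = c * r ^ (j+1) := by rw [heq j]
      have hgeo : Summable (fun j : ℕ => c * r ^ (j+1)) :=
        ((summable_geometric_of_lt_one hr0.le (by linarith)).mul_left (c * r)).congr
          (fun j => by rw [pow_succ]; ring)
      have hsa : Summable a := Summable.of_norm_bounded hgeo hbda
      have hsb : Summable bb := Summable.of_norm_bounded hgeo hbdb
      have hsu : Summable (fun j => a j + bb j) := hsa.add hsb
      set p : X := f + ∑' j, (a j + bb j) with hp
      have hF : Summable (fun j : ℕ => A^[j*N] f) :=
        (summable_nat_add_iff 1).1 (hsa.congr fun j => rfl)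
      have hbb' : Summable (fun j : ℕ => bb (j+1)) :=
        (summable_nat_add_iff 1).2 hsb
      have hterm : ∀ j : ℕ, (⇑Ainv)^[N] (a j + bb j) = A^[j*N] f + bb (j+1) := by
        intro j
        have e1 : (⇑Ainv)^[N] (a j) = A^[j*N] f := by
          have e : a j = A^[N] (A^[j*N] f) := by
            show A^[(j+1)*N] f = A^[N] (A^[j*N] f)
            rw [← Function.iterate_add_apply]
            congr 1
            ring
          rw [e, hcancel _ (hCinf_iter f (hYsub hfY) (j*N)) N]
        have e2 : (⇑Ainv)^[N] (bb j) = bb (j+1) := by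
          show (⇑Ainv)^[N] ((⇑Ainv)^[(j+1)*N] f) = (⇑Ainv)^[(j+1+1)*N] f
          rw [← Function.iterate_add_apply]
          congr 1
          ring
        rw [show a j + bb j = a j + bb j from rfl, ← hpow N, map_add, hpow N, e1, e2]
      have hTN : (⇑Ainv)^[N] p = p := by
        have hmap : (⇑Ainv)^[N] p = (⇑Ainv)^[N] f + ∑' j, (⇑Ainv)^[N] (a j + bb j) := by
          rw [hp, ← hpow N, map_add, (Ainv ^ N).map_tsum hsu, hpow N]
        have hf0 : (⇑Ainv)^[N] f = bb 0 := by
          show (⇑Ainv)^[N] f = (⇑Ainv)^[(0+1)*N] f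
          norm_num
        calc (⇑Ainv)^[N] p
            = bb 0 + ∑' j, (A^[j*N] f + bb (j+1)) := by
              rw [hmap, hf0]; congr 1; exact tsum_congr hterm
          _ = bb 0 + ((∑' j, A^[j*N] f) + ∑' j, bb (j+1)) := by
              rw [Summable.tsum_add hF hbb']
          _ = bb 0 + ((f + ∑' j, a j) + ∑' j, bb (j+1)) := by
              congr 2
              rw [Summable.tsum_eq_zero_add hF]
              congr 1
              simp
          _ = f + ((∑' j, a j) + (bb 0 + ∑' j, bb (j+1))) := by abel
          _ = f + ((∑' j, a j) + ∑' j, bb j) := by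
              rw [← Summable.tsum_eq_zero_add hsb]
          _ = p := by rw [hp, Summable.tsum_add hsa hsb]
      refine ⟨p, ⟨N, hN1, fun _ _ => Set.mem_univ _, hTN⟩, ?_⟩
      have hub : ∀ j : ℕ, ‖a j + bb j‖ ≤ 2 * (c * r ^ (j+1)) := by
        intro j
        have := hbda j
        have := hbdb j
        calc ‖a j + bb j‖ ≤ ‖a j‖ + ‖bb j‖ := norm_add_le _ _
          _ ≤ 2 * (c * r ^ (j+1)) := by linarith
      have hsn : Summable (fun j => ‖a j + bb j‖) :=
        Summable.of_nonneg_of_le (fun j => norm_nonneg _) hub (hgeo.mul_left 2)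
      have hval : ∑' j : ℕ, 2 * (c * r ^ (j+1)) = 2 * c * r * (1 - r)⁻¹ := by
        calc ∑' j : ℕ, 2 * (c * r ^ (j+1))
            = ∑' j : ℕ, (2 * c * r) * r ^ j :=
              tsum_congr fun j => by rw [pow_succ]; ring
          _ = (2 * c * r) * ∑' j : ℕ, r ^ j := tsum_mul_left
          _ = 2 * c * r * (1 - r)⁻¹ := by
              rw [tsum_geometric_of_lt_one hr0.le (by linarith)]
      have hdist : dist f p ≤ 2 * c * r * (1 - r)⁻¹ := by
        rw [dist_eq_norm, hp]
        have : f - (f + ∑' j, (a j + bb j)) = -(∑' j, (a j + bb j)) := by abel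
        rw [this, norm_neg]
        calc ‖∑' j, (a j + bb j)‖ ≤ ∑' j, ‖a j + bb j‖ := norm_tsum_le_tsum_norm hsn
          _ ≤ ∑' j : ℕ, 2 * (c * r ^ (j+1)) := Summable.tsum_le_tsum hub hsn (hgeo.mul_left 2)
          _ = 2 * c * r * (1 - r)⁻¹ := hval
      have hinv2 : (1 - r)⁻¹ ≤ 2 := by
        have h12 : (1/2 : ℝ) ≤ 1 - r := by linarith
        calc (1 - r)⁻¹ ≤ ((1:ℝ)/2)⁻¹ := inv_anti₀ (by norm_num) h12
          _ = 2 := by norm_num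
      have hfin : 2 * c * r * (1 - r)⁻¹ < ε := by
        have h4 : r * (4 * c + 1) < ε := (lt_div_iff₀ (by positivity)).1 hrε
        have h5 : 2 * c * r * (1 - r)⁻¹ ≤ 2 * c * r * 2 :=
          mul_le_mul_of_nonneg_left hinv2 (by positivity)
        nlinarith
      exact lt_of_le_of_lt hdist hfin
    exact dense_closure.mp (hYdense.mono hsub)
end

section
/- Necessary condition for hypercyclicity (unbounded adjoint orbits): Let X be an infinite-dimensional separable Banach space over 𝕂 (𝕂 = ℝ or ℂ) and let A be a densely defined closed linear operator in X that is hypercyclic. Then there is no nonzero continuous linear functional g* ∈ X* admitting a bounded sequence (g_n)_{n∈ℤ₊} in X* with g_0 = g* and g_{n+1}(x) = g_n(Ax) for all n ∈ ℤ₊ and all x ∈ D(A). Equivalently: every g* ∈ C^∞(A*) \ {0} has unbounded orbit {(A*)^n g* : n ∈ ℤ₊} under the adjoint A*. -/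
open Filter Topology TopologicalSpace

/-- **Necessary condition for linear hypercyclicity: unbounded adjoint orbits.**
A bounded sequence `g : ℕ → X*` with `g 0 = g*` and `g (n+1) x = g n (A x)` on
`D(A)` encodes a bounded orbit of `g*` under the adjoint `A*`. -/
theorem necessary_condition_unbounded_adjoint_orbits
    {𝕜 X : Type*} [RCLike 𝕜] [NormedAddCommGroup X] [NormedSpace 𝕜 X]
    [CompleteSpace X] [SeparableSpace X]
    (hinfdim : ¬ FiniteDimensional 𝕜 X)
    (D : Submodule 𝕜 X) (A : X → X)
    (hlin : IsLinearOn 𝕜 A (D : Set X))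
    (hdd : Dense (D : Set X))
    (hcl : ClosedPower A (D : Set X) 1)
    (hhc : HypercyclicOp A (D : Set X)) :
    ¬ ∃ g : ℕ → (X →L[𝕜] 𝕜), g 0 ≠ 0 ∧ (∃ C : ℝ, ∀ n : ℕ, ‖g n‖ ≤ C) ∧
      (∀ n : ℕ, ∀ x ∈ (D : Set X), g (n + 1) x = g n (A x)) := by
  rintro ⟨g, hg0, ⟨C, hC⟩, hrec⟩
  obtain ⟨f, hfD, hf0, hfd⟩ := hhc
  have key : ∀ n k : ℕ, g k (A^[n] f) = g (k + n) f := by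
    intro n
    induction n with
    | zero => intro k; simp
    | succ n ih =>
      intro k
      rw [Function.iterate_succ_apply']
      have := hrec k (A^[n] f) (hfD n)
      rw [← this, ih (k + 1)]
      ring_nf
  set K := C * ‖f‖ with hK
  have hbd : ∀ x : X, ‖g 0 x‖ ≤ K := by
    have hsub : Set.range (fun n : ℕ => A^[n] f) ⊆ {x | ‖g 0 x‖ ≤ K} := by
      rintro _ ⟨n, rfl⟩
      have h1 : g 0 (A^[n] f) = g n f := by simpa using key n 0
      simp only [Set.mem_setOf_eq, h1]
      calc ‖g n f‖ ≤ ‖g n‖ * ‖f‖ := (g n).le_opNorm f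
        _ ≤ C * ‖f‖ := by
            exact mul_le_mul_of_nonneg_right (hC n) (norm_nonneg f)
    have hcl' : IsClosed {x : X | ‖g 0 x‖ ≤ K} :=
      isClosed_le (by continuity) continuous_const
    intro x
    have : closure (Set.range fun n : ℕ => A^[n] f) ⊆ {x : X | ‖g 0 x‖ ≤ K} :=
      hcl'.closure_subset_iff.mpr hsub
    exact this (by rw [hfd.closure_eq]; trivial)
  obtain ⟨y, hy⟩ : ∃ y, g 0 y ≠ 0 := by
    by_contra h
    push_neg at h
    exact hg0 (ContinuousLinearMap.ext fun y => by simpa using h y)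
  have hy' : 0 < ‖g 0 y‖ := norm_pos_iff.mpr hy
  have hK0 : 0 ≤ K := le_trans (norm_nonneg _) (hbd 0)
  have := hbd ((((K + 1) / ‖g 0 y‖ : ℝ) : 𝕜) • y)
  rw [map_smul, norm_smul, RCLike.norm_ofReal,
    abs_of_nonneg (by positivity)] at this
  rw [div_mul_cancel₀ _ (ne_of_gt hy')] at this
  linarith
end

section
/- Necessary condition for hypercyclicity (dense ranges): Let X be an infinite-dimensional separable Banach space over 𝕂 (𝕂 = ℝ or ℂ) and let A be a densely defined closed linear operator in X that is hypercyclic. Then for every λ ∈ 𝕂, the range R(A − λI) = {Ax − λx : x ∈ D(A)} is dense in X. In particular, in the complex case the residual spectrum of A is empty: there is no λ ∈ ℂ for which A − λI is injective and R(A − λI) is not dense in X. -/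
open Filter Topology TopologicalSpace

lemma not_dense_geom {𝕜 : Type*} [RCLike 𝕜] (l c : 𝕜) :
    ¬ Dense (Set.range fun n : ℕ => l ^ n * c) := by
  intro h
  rcases eq_or_ne c 0 with rfl | hc
  · have h1 : (1 : 𝕜) ∈ closure (Set.range fun n : ℕ => l ^ n * 0) := h 1
    simp only [mul_zero, Set.range_const, closure_singleton, Set.mem_singleton_iff] at h1
    exact one_ne_zero h1
  · set a := ‖l‖ with ha
    set c0 := ‖c‖ with hc0
    have hc0pos : 0 < c0 := norm_pos_iff.2 hc
    have hnorm : ∀ n : ℕ, ‖l ^ n * c‖ = a ^ n * c0 := by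
      intro n; rw [norm_mul, norm_pow]
    by_cases hA : a ≤ 1
    · obtain ⟨y, hy, hdy⟩ := Metric.mem_closure_iff.1 (h ((2 * c0 : ℝ) : 𝕜)) c0 hc0pos
      obtain ⟨n, rfl⟩ := hy
      simp only [] at hdy
      have h1 : ‖l ^ n * c‖ ≤ c0 := by
        rw [hnorm]
        have : a ^ n ≤ 1 := pow_le_one₀ (norm_nonneg l) hA
        nlinarith
      have h2 : ‖((2 * c0 : ℝ) : 𝕜)‖ = 2 * c0 := by
        rw [RCLike.norm_ofReal, abs_of_nonneg (by linarith)]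
      have h3 := norm_sub_norm_le (((2 * c0 : ℝ) : 𝕜)) (l ^ n * c)
      rw [← dist_eq_norm] at h3
      linarith
    · push_neg at hA
      set t := c0 * (1 + a) / 2 with ht
      set r := c0 * (a - 1) / 2 with hr
      have hrpos : 0 < r := by rw [hr]; nlinarith
      obtain ⟨y, hy, hdy⟩ := Metric.mem_closure_iff.1 (h ((t : ℝ) : 𝕜)) r hrpos
      obtain ⟨n, rfl⟩ := hy
      simp only [] at hdy
      have h2 : ‖((t : ℝ) : 𝕜)‖ = t := by
        rw [RCLike.norm_ofReal, abs_of_nonneg (by rw [ht]; nlinarith)]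
      have habs : |‖((t : ℝ) : 𝕜)‖ - ‖l ^ n * c‖| ≤ dist ((t : ℝ) : 𝕜) (l ^ n * c) := by
        rw [dist_eq_norm]; exact abs_norm_sub_norm_le _ _
      rw [h2, hnorm] at habs
      have hlt : |t - a ^ n * c0| < r := lt_of_le_of_lt habs hdy
      rw [abs_lt] at hlt
      rcases Nat.eq_zero_or_pos n with rfl | hn
      · simp only [pow_zero, one_mul] at hlt
        rw [ht, hr] at hlt
        obtain ⟨h1', h2'⟩ := hlt
        linarith
      · have hge : a ≤ a ^ n := le_self_pow₀ (le_of_lt hA) (Nat.pos_iff_ne_zero.1 hn)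
        have h4 : a ^ n * c0 - t ≥ r := by rw [ht, hr]; nlinarith
        linarith [hlt.1]

/-- **Necessary condition for linear hypercyclicity: dense ranges of
`A - λI`; in particular the residual spectrum is empty.** -/
theorem necessary_condition_dense_ranges
    {𝕜 X : Type*} [RCLike 𝕜] [NormedAddCommGroup X] [NormedSpace 𝕜 X]
    [CompleteSpace X] [SeparableSpace X]
    (hinfdim : ¬ FiniteDimensional 𝕜 X)
    (D : Submodule 𝕜 X) (A : X → X)
    (hlin : IsLinearOn 𝕜 A (D : Set X))
    (hdd : Dense (D : Set X))
    (hcl : ClosedPower A (D : Set X) 1)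
    (hhc : HypercyclicOp A (D : Set X)) :
    (∀ l : 𝕜, Dense ((fun x => A x - l • x) '' (D : Set X))) ∧
    ¬ ∃ l : 𝕜, Set.InjOn (fun x => A x - l • x) (D : Set X) ∧
      ¬ Dense ((fun x => A x - l • x) '' (D : Set X)) := by
  have key : ∀ l : 𝕜, Dense ((fun x => A x - l • x) '' (D : Set X)) := by
    intro l
    by_contra hnd
    -- The restriction of `x ↦ A x - l • x` to `D` as a linear map.
    let T : D →ₗ[𝕜] X :=
      { toFun := fun x => A (x : X) - l • (x : X)
        map_add' := by
          rintro ⟨x, hx⟩ ⟨y, hy⟩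
          simp only [Submodule.coe_add, hlin.1 x hx y hy, smul_add]
          abel
        map_smul' := by
          rintro c ⟨x, hx⟩
          simp only [Submodule.coe_smul, hlin.2 c x hx, smul_sub, RingHom.id_apply]
          rw [smul_comm] }
    have hrange : (LinearMap.range T : Set X) = (fun x => A x - l • x) '' (D : Set X) := by
      rw [LinearMap.coe_range]
      ext z
      constructor
      · rintro ⟨⟨x, hx⟩, rfl⟩; exact ⟨x, hx, rfl⟩
      · rintro ⟨x, hx, rfl⟩; exact ⟨⟨x, hx⟩, rfl⟩
    set p := (LinearMap.range T).topologicalClosure with hp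
    have hpcoe : (p : Set X) = closure ((fun x => A x - l • x) '' (D : Set X)) := by
      rw [hp, Submodule.topologicalClosure_coe, hrange]
    obtain ⟨x, hx⟩ : ∃ x, x ∉ p := by
      by_contra hall
      push_neg at hall
      refine hnd (fun z => ?_)
      have := hall z
      rwa [← SetLike.mem_coe, hpcoe] at this
    haveI : IsClosed (p : Set X) := Submodule.isClosed_topologicalClosure _
    have hmkne : (Submodule.Quotient.mk x : X ⧸ p) ≠ 0 := by
      simpa [Submodule.Quotient.mk_eq_zero] using hx
    obtain ⟨g, hg1, hgx⟩ := exists_dual_vector 𝕜 (Submodule.Quotient.mk x : X ⧸ p) (norm_ne_zero_iff.2 hmkne)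
    -- continuous quotient map
    let q : X →L[𝕜] X ⧸ p :=
      p.mkQ.mkContinuous 1 (fun y => by
        simpa using Submodule.Quotient.norm_mk_le p y)
    let φ : X →L[𝕜] 𝕜 := g.comp q
    have hφx : φ x ≠ 0 := by
      have : φ x = ‖(Submodule.Quotient.mk x : X ⧸ p)‖ := by
        simp only [φ, q, ContinuousLinearMap.comp_apply, LinearMap.mkContinuous_apply,
          Submodule.mkQ_apply]
        exact hgx
      rw [this]
      simp only [ne_eq, RCLike.ofReal_eq_zero, norm_eq_zero]
      exact hmkne
    have hφp : ∀ z ∈ p, φ z = 0 := by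
      intro z hz
      have : (Submodule.Quotient.mk z : X ⧸ p) = 0 := (Submodule.Quotient.mk_eq_zero p).2 hz
      simp only [φ, q, ContinuousLinearMap.comp_apply, LinearMap.mkContinuous_apply,
        Submodule.mkQ_apply, this, map_zero]
    have hφA : ∀ y ∈ D, φ (A y) = l * φ y := by
      intro y hy
      have hz : A y - l • y ∈ p := by
        apply Submodule.le_topologicalClosure
        exact ⟨⟨y, hy⟩, rfl⟩
      have := hφp _ hz
      rw [map_sub, map_smul, smul_eq_mul, sub_eq_zero] at this
      exact this
    obtain ⟨f, hfC, hfne, hfd⟩ := hhc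
    have hfD : ∀ k : ℕ, A^[k] f ∈ D := hfC
    have hiter : ∀ n : ℕ, φ (A^[n] f) = l ^ n * φ f := by
      intro n
      induction n with
      | zero => simp
      | succ n ih =>
        rw [Function.iterate_succ_apply', hφA _ (hfD n), ih, pow_succ]
        ring
    have hsurj : Function.Surjective φ := by
      intro w
      refine ⟨(w / φ x) • x, ?_⟩
      rw [map_smul, smul_eq_mul]
      field_simp
    have hdi : Dense (Set.range fun n : ℕ => l ^ n * φ f) := by
      rw [dense_iff_inter_open]
      rintro U hU ⟨w, hw⟩
      obtain ⟨v, hv⟩ := hsurj w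
      have hopen : IsOpen (φ ⁻¹' U) := hU.preimage φ.continuous
      have hne : (φ ⁻¹' U).Nonempty := ⟨v, by simp [Set.mem_preimage, hv, hw]⟩
      obtain ⟨y, hy1, hy2⟩ := dense_iff_inter_open.1 hfd _ hopen hne
      obtain ⟨n, rfl⟩ := hy2
      exact ⟨φ (A^[n] f), hy1, ⟨n, (hiter n).symm⟩⟩
    exact not_dense_geom l (φ f) hdi
  exact ⟨key, fun ⟨l, _, hnd⟩ => hnd (key l)⟩
end
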